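/- Fix x ∈ Ω and α ∈ [0,1) with 𝒢(Ω(x,T_ℓ), α) nonempty, and let C = {s ∈ S : some entry of x equals s} be the set of support values occurring in x. Then B_{T_ℓ}^*(x) = inf{E[F] : F ∈ 𝒻_{C^+}(Ω(x,T_ℓ), α)}. -/

import Mathlib

noncomputable section

/-- Distributions on the finite support `S`, viewed as points of the probability
simplex inside `EuclideanSpace ℝ S` (Euclidean metric). -/
def distSet (S : Finset ℝ) : Set (EuclideanSpace ℝ ↥S) :=
  {F | (∀ s, 0 ≤ F s) ∧ ∑ s, F s = 1}

/-- Mean of a distribution on `S`. -/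
def distMean (S : Finset ℝ) (F : EuclideanSpace ℝ ↥S) : ℝ :=
  ∑ s : ↥S, F s * (s : ℝ)

open Classical in
/-- `P_F[A]`: probability of a set `A` of `n`-tuples under `n` i.i.d. draws from `F`. -/
def probOf (S : Finset ℝ) (n : ℕ) (F : EuclideanSpace ℝ ↥S)
    (A : Set (Fin n → ↥S)) : ℝ :=
  ∑ y : Fin n → ↥S, if y ∈ A then ∏ i, F (y i) else 0

/-- The interior likely set `𝒢(A, α)`. -/
def intLikely (S : Finset ℝ) (n : ℕ) (A : Set (Fin n → ↥S)) (α : ℝ) :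
    Set (EuclideanSpace ℝ ↥S) :=
  {F | F ∈ distSet S ∧ α < probOf S n F A}

/-- The likely set `𝒻(A, α)`: the closure of `𝒢(A, α)`. -/
def likely (S : Finset ℝ) (n : ℕ) (A : Set (Fin n → ↥S)) (α : ℝ) :
    Set (EuclideanSpace ℝ ↥S) :=
  closure (intLikely S n A α)

/-- `Ω`: the set of nondecreasing (`sorted`) `n`-tuples over `S`. -/
def sortedTuples (S : Finset ℝ) (n : ℕ) : Set (Fin n → ↥S) :=
  {x | Monotone x}

/-- The sorted version of a tuple. -/
def sortTup (S : Finset ℝ) (n : ℕ) (y : Fin n → ↥S) : Fin n → ↥S :=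
  y ∘ Tuple.sort y

/-- Probability of a set `A ⊆ Ω` of sorted tuples, identifying tuples with
their sorted versions. -/
def probSorted (S : Finset ℝ) (n : ℕ) (F : EuclideanSpace ℝ ↥S)
    (A : Set (Fin n → ↥S)) : ℝ :=
  probOf S n F {y | sortTup S n y ∈ A}

/-- Interior likely set for a set of sorted tuples. -/
def intLikelySorted (S : Finset ℝ) (n : ℕ) (A : Set (Fin n → ↥S)) (α : ℝ) :
    Set (EuclideanSpace ℝ ↥S) :=
  {F | F ∈ distSet S ∧ α < probSorted S n F A}

/-- Likely set for a set of sorted tuples. -/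
def likelySorted (S : Finset ℝ) (n : ℕ) (A : Set (Fin n → ↥S)) (α : ℝ) :
    Set (EuclideanSpace ℝ ↥S) :=
  closure (intLikelySorted S n A α)

/-- Upper set `Ω(x, R)` of `x` under a relation `R` on `Ω`. -/
def upperSet (S : Finset ℝ) (n : ℕ) (r : (Fin n → ↥S) → (Fin n → ↥S) → Prop)
    (x : Fin n → ↥S) : Set (Fin n → ↥S) :=
  {y ∈ sortedTuples S n | r x y}

/-- Pessimal bound `B_R^*(x) = inf {E[F] : F ∈ 𝒻(Ω(x,R), α)}`. -/
def pessimal (S : Finset ℝ) (n : ℕ) (r : (Fin n → ↥S) → (Fin n → ↥S) → Prop)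
    (α : ℝ) (x : Fin n → ↥S) : ℝ :=
  sInf (distMean S '' likelySorted S n (upperSet S n r x) α)

/-- `G` and `H` agree pointwise on `C`. -/
def ptAgree {S : Finset ℝ} (C : Set ↥S) (G H : EuclideanSpace ℝ ↥S) : Prop :=
  ∀ c ∈ C, G c = H c

open Classical in
/-- `G` and `H` agree cumulatively on `C`. -/
def cumAgree (S : Finset ℝ) (C : Set ↥S) (G H : EuclideanSpace ℝ ↥S) : Prop :=
  ∀ c ∈ C, (∑ s : ↥S, if s ≤ c then G s else 0) = ∑ s : ↥S, if s ≤ c then H s else 0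

/-- The refinement `𝒻_C`: distributions supported inside `C`. -/
def refinement (S : Finset ℝ) (C : Set ↥S) : Set (EuclideanSpace ℝ ↥S) :=
  {F ∈ distSet S | ∀ s, s ∉ C → F s = 0}

/-- `𝒢_C(A, α) = 𝒻_C ∩ 𝒢(A, α)` (for a set `A` of sorted tuples). -/
def intLikelySortedC (S : Finset ℝ) (n : ℕ) (C : Set ↥S)
    (A : Set (Fin n → ↥S)) (α : ℝ) : Set (EuclideanSpace ℝ ↥S) :=
  refinement S C ∩ intLikelySorted S n A α

/-- `𝒻_C(A, α)`: the closure of `𝒢_C(A, α)`. -/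
def likelySortedC (S : Finset ℝ) (n : ℕ) (C : Set ↥S)
    (A : Set (Fin n → ↥S)) (α : ℝ) : Set (EuclideanSpace ℝ ↥S) :=
  closure (intLikelySortedC S n C A α)

/-- The minimum of `S`, as an element of `↥S`. -/
def sMinElt (S : Finset ℝ) (hS : S.Nonempty) : ↥S :=
  ⟨S.min' hS, S.min'_mem hS⟩

/-- The augmentation `C⁺ = C ∪ {S_min} ∪ {succ c : c ∈ C, c ≠ S_max}`, where
`succ c` is the smallest element of `S` greater than `c`. -/
def aug (S : Finset ℝ) (hS : S.Nonempty) (C : Set ↥S) : Set ↥S :=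
  C ∪ {sMinElt S hS} ∪ {t | ∃ c ∈ C, c < t ∧ ∀ u : ↥S, c < u → t ≤ u}

/-- Low lexicographic order: `x ≤_{T_ℓ} y` iff `x = y` or `x i < y i` at the
smallest index `i` where `x` and `y` differ. -/
def lexLowLE {n : ℕ} {α : Type*} [LinearOrder α] (x y : Fin n → α) : Prop :=
  x = y ∨ ∃ i, x i < y i ∧ ∀ j, j < i → x j = y j


/-! ### Auxiliary machinery for the proof -/

open Classical in
/-- `φ s`: the largest element of `C⁺` that is `≤ s`. -/
def phiAux (S : Finset ℝ) (hS : S.Nonempty) (C : Set ↥S) (s : ↥S) : ↥S :=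
  (Finset.univ.filter fun t => t ∈ aug S hS C ∧ t ≤ s).max'
    ⟨sMinElt S hS, Finset.mem_filter.mpr ⟨Finset.mem_univ _,
      Or.inl (Or.inr rfl), S.min'_le s s.2⟩⟩

section PhiAux

variable {S : Finset ℝ} {hS : S.Nonempty} {C : Set ↥S}

open Classical in
lemma phiAux_spec (s : ↥S) : phiAux S hS C s ∈ aug S hS C ∧ phiAux S hS C s ≤ s := by
  have h := Finset.max'_mem (Finset.univ.filter fun t => t ∈ aug S hS C ∧ t ≤ s)
    ⟨sMinElt S hS, Finset.mem_filter.mpr ⟨Finset.mem_univ _,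
      Or.inl (Or.inr rfl), S.min'_le s s.2⟩⟩
  exact (Finset.mem_filter.mp h).2

open Classical in
lemma le_phiAux {t s : ↥S} (ht : t ∈ aug S hS C) (hts : t ≤ s) : t ≤ phiAux S hS C s :=
  Finset.le_max' _ t (Finset.mem_filter.mpr ⟨Finset.mem_univ _, ht, hts⟩)

lemma phiAux_mono : Monotone (phiAux S hS C) := fun s _ h =>
  le_phiAux (phiAux_spec s).1 ((phiAux_spec s).2.trans h)

lemma phiAux_lt {c s : ↥S} (hc : c ∈ C) (hcs : c < s) : c < phiAux S hS C s := by
  classical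
  set T := Finset.univ.filter (fun u : ↥S => c < u) with hT
  have hTne : T.Nonempty := ⟨s, by simp [hT, hcs]⟩
  set t := T.min' hTne with ht
  have htc : c < t := (Finset.mem_filter.mp (T.min'_mem hTne)).2
  have hmin : ∀ u : ↥S, c < u → t ≤ u := fun u hu => T.min'_le u (by simp [hT, hu])
  have htaug : t ∈ aug S hS C := Or.inr ⟨c, hc, htc, hmin⟩
  exact lt_of_lt_of_le htc (le_phiAux htaug (hmin s hcs))

lemma phiAux_lt_iff {c s : ↥S} (hc : c ∈ C) : c < phiAux S hS C s ↔ c < s :=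
  ⟨fun h => lt_of_lt_of_le h (phiAux_spec s).2, fun h => phiAux_lt hc h⟩

lemma phiAux_eq_iff {c s : ↥S} (hc : c ∈ C) : c = phiAux S hS C s ↔ c = s := by
  constructor
  · intro h
    have h2 : s ≤ c := by
      by_contra hlt
      have h3 : c < phiAux S hS C s := phiAux_lt hc (lt_of_not_ge hlt)
      rw [← h] at h3
      exact lt_irrefl _ h3
    exact le_antisymm (h.le.trans (phiAux_spec s).2) h2
  · intro h
    exact le_antisymm (le_phiAux (Or.inl (Or.inl hc)) h.le) ((phiAux_spec s).2.trans h.ge)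

end PhiAux

open Classical in
/-- Pushforward of a distribution along a map `φ` of the support. -/
def pushf (S : Finset ℝ) (φ : ↥S → ↥S) (F : EuclideanSpace ℝ ↥S) :
    EuclideanSpace ℝ ↥S :=
  WithLp.toLp 2 (fun s => ∑ t : ↥S, if φ t = s then F t else 0)

lemma sortTup_comp (S : Finset ℝ) (n : ℕ) (φ : ↥S → ↥S) (hφ : Monotone φ)
    (y : Fin n → ↥S) : sortTup S n (φ ∘ y) = φ ∘ sortTup S n y := by
  have hmono : Monotone (φ ∘ (y ∘ Tuple.sort y)) := hφ.comp (Tuple.monotone_sort y)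
  have h1 : φ ∘ y = (φ ∘ (y ∘ Tuple.sort y)) ∘ ⇑(Tuple.sort y)⁻¹ := by
    ext i; simp
  unfold sortTup
  rw [h1, Tuple.comp_perm_comp_sort_eq_comp_sort,
    Tuple.sort_eq_refl_iff_monotone.mpr hmono]
  simp

open Classical in
lemma probOf_push (S : Finset ℝ) (n : ℕ) (φ : ↥S → ↥S) (F : EuclideanSpace ℝ ↥S)
    (B : Set (Fin n → ↥S)) :
    probOf S n (pushf S φ F) B = probOf S n F ((fun y : Fin n → ↥S => φ ∘ y) ⁻¹' B) := by
  unfold probOf pushf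
  have h1 : ∀ y : Fin n → ↥S,
      (∏ i, ∑ t : ↥S, if φ t = y i then F t else 0)
        = ∑ w : Fin n → ↥S, ∏ i, if φ (w i) = y i then F (w i) else 0 := by
    intro y
    rw [Finset.prod_univ_sum, Fintype.piFinset_univ]
  calc (∑ y : Fin n → ↥S, if y ∈ B then ∏ i, ∑ t : ↥S, if φ t = y i then F t else 0 else 0)
      = ∑ y : Fin n → ↥S, ∑ w : Fin n → ↥S,
          (if y ∈ B then ∏ i, if φ (w i) = y i then F (w i) else 0 else 0) := by
        refine Finset.sum_congr rfl fun y _ => ?_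
        rw [h1 y]
        split
        · rfl
        · simp
    _ = ∑ w : Fin n → ↥S, ∑ y : Fin n → ↥S,
          (if y ∈ B then ∏ i, if φ (w i) = y i then F (w i) else 0 else 0) :=
        Finset.sum_comm
    _ = ∑ w : Fin n → ↥S, if φ ∘ w ∈ B then ∏ i, F (w i) else 0 := by
        refine Finset.sum_congr rfl fun w _ => ?_
        rw [Finset.sum_eq_single (φ ∘ w)]
        · by_cases hB : φ ∘ w ∈ B
          · rw [if_pos hB, if_pos hB]
            exact Finset.prod_congr rfl fun i _ => by simp [Function.comp]
          · rw [if_neg hB, if_neg hB]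
        · intro y _ hy
          have hz : (∏ i, if φ (w i) = y i then F (w i) else 0) = 0 := by
            obtain ⟨i, hi⟩ : ∃ i, φ (w i) ≠ y i := by
              by_contra hcon
              push_neg at hcon
              exact hy (funext fun i => (hcon i).symm)
            exact Finset.prod_eq_zero (Finset.mem_univ i) (if_neg hi)
          rw [hz]
          split <;> rfl
        · intro h
          exact absurd (Finset.mem_univ _) h
    _ = ∑ w : Fin n → ↥S, if w ∈ (fun y : Fin n → ↥S => φ ∘ y) ⁻¹' B then ∏ i, F (w i) else 0 := by
        refine Finset.sum_congr rfl fun w _ => ?_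
        congr 1

lemma upper_phiAux_iff (S : Finset ℝ) (hS : S.Nonempty) (n : ℕ) (x : Fin n → ↥S)
    (z : Fin n → ↥S) (hz : Monotone z) :
    (phiAux S hS (Set.range x)) ∘ z ∈ upperSet S n lexLowLE x ↔
      z ∈ upperSet S n lexLowLE x := by
  have hlt : ∀ (i : Fin n) (s : ↥S), x i < phiAux S hS (Set.range x) s ↔ x i < s :=
    fun i s => phiAux_lt_iff (Set.mem_range_self i)
  have heq : ∀ (i : Fin n) (s : ↥S), x i = phiAux S hS (Set.range x) s ↔ x i = s :=
    fun i s => phiAux_eq_iff (Set.mem_range_self i)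
  constructor
  · rintro ⟨hm, h⟩
    refine ⟨hz, ?_⟩
    rcases h with h | ⟨i, h1, h2⟩
    · left; funext i; exact (heq i (z i)).mp (congrFun h i)
    · right; exact ⟨i, (hlt i (z i)).mp h1, fun j hj => (heq j (z j)).mp (h2 j hj)⟩
  · rintro ⟨hm, h⟩
    refine ⟨phiAux_mono.comp hz, ?_⟩
    rcases h with h | ⟨i, h1, h2⟩
    · left; funext i; exact (heq i (z i)).mpr (congrFun h i)
    · right; exact ⟨i, (hlt i (z i)).mpr h1, fun j hj => (heq j (z j)).mpr (h2 j hj)⟩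

/-- for the low lexicographic order `T_ℓ` and `C` the set of
support values occurring in `x`,
`B_{T_ℓ}^*(x) = inf {E[F] : F ∈ 𝒻_{C⁺}(Ω(x, T_ℓ), α)}`. -/
theorem stmt18 (S : Finset ℝ) (hS : S.Nonempty) (n : ℕ) (hn : 1 ≤ n)
    (α : ℝ) (hα0 : 0 ≤ α) (hα1 : α < 1)
    (x : Fin n → ↥S) (hx : x ∈ sortedTuples S n)
    (hne : (intLikelySorted S n (upperSet S n lexLowLE x) α).Nonempty) :
    pessimal S n lexLowLE α x =
      sInf (distMean S ''
        likelySortedC S n (aug S hS (Set.range x)) (upperSet S n lexLowLE x) α) := by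
  classical
  set A := upperSet S n lexLowLE x with hA
  set C : Set ↥S := Set.range x with hC
  set Cp := aug S hS C with hCpdef
  set φ := phiAux S hS C with hφdef
  -- continuity of the mean and closedness of the simplex
  have hcont : Continuous (distMean S) := by
    unfold distMean
    exact continuous_finset_sum _ fun s _ =>
      ((EuclideanSpace.proj s).continuous.mul continuous_const)
  have hclosed : IsClosed (distSet S) := by
    have h1 : IsClosed {F : EuclideanSpace ℝ ↥S | ∀ s, 0 ≤ F s} := by
      have he : {F : EuclideanSpace ℝ ↥S | ∀ s, 0 ≤ F s} = ⋂ s, {F | 0 ≤ F s} := by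
        ext F; simp
      rw [he]
      exact isClosed_iInter fun s =>
        isClosed_le continuous_const (EuclideanSpace.proj s).continuous
    have h2 : IsClosed {F : EuclideanSpace ℝ ↥S | ∑ s, F s = 1} :=
      isClosed_eq (continuous_finset_sum _ fun s _ => (EuclideanSpace.proj s).continuous)
        continuous_const
    have he : distSet S = {F : EuclideanSpace ℝ ↥S | ∀ s, 0 ≤ F s} ∩
        {F : EuclideanSpace ℝ ↥S | ∑ s, F s = 1} := rfl
    rw [he]
    exact h1.inter h2
  -- lower bound on means
  have hlb : ∀ F ∈ distSet S, S.min' hS ≤ distMean S F := by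
    intro F hF
    have h1 : ∑ s : ↥S, F s * S.min' hS ≤ ∑ s : ↥S, F s * (s : ℝ) :=
      Finset.sum_le_sum fun s _ => mul_le_mul_of_nonneg_left (S.min'_le s s.2) (hF.1 s)
    calc S.min' hS = (∑ s : ↥S, F s) * S.min' hS := by rw [hF.2, one_mul]
      _ = ∑ s : ↥S, F s * S.min' hS := by rw [Finset.sum_mul]
      _ ≤ distMean S F := h1
  -- basic inclusions
  have hGsub : intLikelySorted S n A α ⊆ distSet S := fun F hF => hF.1
  have hGCsub : intLikelySortedC S n Cp A α ⊆ intLikelySorted S n A α := fun F hF => hF.2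
  -- the inf over a closure equals the inf over the set itself
  have hinf : ∀ T : Set (EuclideanSpace ℝ ↥S), T ⊆ distSet S → T.Nonempty →
      sInf (distMean S '' closure T) = sInf (distMean S '' T) := by
    intro T hT hTne
    have hclosT : closure T ⊆ distSet S := closure_minimal hT hclosed
    have hbdd : BddBelow (distMean S '' closure T) := by
      refine ⟨S.min' hS, ?_⟩
      rintro b ⟨F, hF, rfl⟩
      exact hlb F (hclosT hF)
    have hbdd' : BddBelow (distMean S '' T) :=
      hbdd.mono (Set.image_mono subset_closure)
    refine le_antisymm
      (csInf_le_csInf hbdd (hTne.image _) (Set.image_mono subset_closure))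
      (le_csInf ((hTne.mono subset_closure).image _) ?_)
    rintro b ⟨F, hF, rfl⟩
    have h1 : distMean S F ∈ closure (distMean S '' T) :=
      (image_closure_subset_closure_image hcont) (Set.mem_image_of_mem _ hF)
    have h2 : closure (distMean S '' T) ⊆ Set.Ici (sInf (distMean S '' T)) :=
      closure_minimal (fun a ha => csInf_le hbdd' ha) isClosed_Ici
    exact h2 h1
  -- probability is preserved by the pushforward
  have hprob : ∀ F : EuclideanSpace ℝ ↥S,
      probSorted S n (pushf S φ F) A = probSorted S n F A := by
    intro F
    unfold probSorted
    rw [probOf_push S n φ F {y | sortTup S n y ∈ A}]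
    congr 1
    ext w
    simp only [Set.mem_preimage, Set.mem_setOf_eq]
    rw [sortTup_comp S n φ phiAux_mono w]
    exact upper_phiAux_iff S hS n x (sortTup S n w) (Tuple.monotone_sort w)
  -- the pushforward stays in the simplex, is supported in `C⁺`,
  -- and does not increase the mean
  have hkey : ∀ F ∈ intLikelySorted S n A α,
      pushf S φ F ∈ intLikelySortedC S n Cp A α ∧
        distMean S (pushf S φ F) ≤ distMean S F := by
    intro F hF
    obtain ⟨⟨hFpos, hFsum⟩, hFα⟩ := hF
    have hds : pushf S φ F ∈ distSet S := by
      constructor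
      · intro s
        apply Finset.sum_nonneg
        intro t _
        by_cases h : φ t = s
        · simp [pushf, h, hFpos t]
        · simp [pushf, h]
      · have : ∑ s : ↥S, pushf S φ F s = ∑ t : ↥S, ∑ s : ↥S, if φ t = s then F t else 0 := by
          rw [← Finset.sum_comm]
          rfl
        rw [this]
        have h2 : ∀ t : ↥S, (∑ s : ↥S, if φ t = s then F t else 0) = F t := by
          intro t
          rw [Finset.sum_ite_eq]
          simp
        rw [Finset.sum_congr rfl fun t _ => h2 t]
        exact hFsum
    have hsupp : ∀ s, s ∉ Cp → pushf S φ F s = 0 := by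
      intro s hs
      apply Finset.sum_eq_zero
      intro t _
      rw [if_neg]
      intro h
      exact hs (h ▸ (phiAux_spec t).1)
    have hmean : distMean S (pushf S φ F) ≤ distMean S F := by
      have e : distMean S (pushf S φ F) = ∑ t : ↥S, F t * ((φ t : ℝ)) := by
        unfold distMean pushf
        calc ∑ s : ↥S, (∑ t : ↥S, if φ t = s then F t else 0) * (s : ℝ)
            = ∑ s : ↥S, ∑ t : ↥S, (if φ t = s then F t * (s : ℝ) else 0) := by
              refine Finset.sum_congr rfl fun s _ => ?_
              rw [Finset.sum_mul]
              refine Finset.sum_congr rfl fun t _ => ?_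
              split
              · rfl
              · rw [zero_mul]
          _ = ∑ t : ↥S, ∑ s : ↥S, (if φ t = s then F t * (s : ℝ) else 0) :=
              Finset.sum_comm
          _ = ∑ t : ↥S, F t * ((φ t : ℝ)) := by
              refine Finset.sum_congr rfl fun t _ => ?_
              rw [Finset.sum_ite_eq]
              simp
      rw [e]
      unfold distMean
      refine Finset.sum_le_sum fun t _ => mul_le_mul_of_nonneg_left ?_ (hFpos t)
      exact_mod_cast (phiAux_spec t).2
    refine ⟨⟨⟨hds, hsupp⟩, hds, ?_⟩, hmean⟩
    rw [hprob F]
    exact hFα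
  -- assemble
  have hGCne : (intLikelySortedC S n Cp A α).Nonempty :=
    ⟨pushf S φ hne.choose, (hkey _ hne.choose_spec).1⟩
  have e1 : pessimal S n lexLowLE α x = sInf (distMean S '' intLikelySorted S n A α) := by
    unfold pessimal likelySorted
    exact hinf _ hGsub hne
  have e2 : sInf (distMean S '' likelySortedC S n Cp A α)
      = sInf (distMean S '' intLikelySortedC S n Cp A α) := by
    unfold likelySortedC
    exact hinf _ (fun F hF => hGsub (hGCsub hF)) hGCne
  have hbddG : BddBelow (distMean S '' intLikelySorted S n A α) := by
    refine ⟨S.min' hS, ?_⟩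
    rintro b ⟨F, hF, rfl⟩
    exact hlb F (hGsub hF)
  have hbddGC : BddBelow (distMean S '' intLikelySortedC S n Cp A α) :=
    hbddG.mono (Set.image_mono hGCsub)
  have e3 : sInf (distMean S '' intLikelySorted S n A α)
      = sInf (distMean S '' intLikelySortedC S n Cp A α) := by
    refine le_antisymm
      (csInf_le_csInf hbddG (hGCne.image _) (Set.image_mono hGCsub))
      (le_csInf (hne.image _) ?_)
    rintro b ⟨F, hF, rfl⟩
    exact le_trans (csInf_le hbddGC (Set.mem_image_of_mem _ (hkey F hF).1)) (hkey F hF).2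
  rw [e1, e3, ← e2]

end
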